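/- The generalized Laguerre polynomials satisfy the orthogonality relation ∫_0^∞ x^α e^{−x} L_n^α(x) L_m^α(x) dx = (Γ(n+α+1)/n!) δ_{n,m} for all integers n, m ≥ 0 and real α > −1. -/

import Mathlib

open MeasureTheory Real Finset

/-- The generalized binomial coefficient `binom(x, k) = Γ(x+1)/(Γ(k+1) Γ(x-k+1))`. -/
noncomputable def genBinom (x : ℝ) (k : ℕ) : ℝ :=
  Real.Gamma (x + 1) / (Real.Gamma (k + 1) * Real.Gamma (x - k + 1))

/-- The generalized Laguerre polynomial
`L_m^α(t) = Σ_{n=0}^m (-1)^n binom(m+α, m-n) t^n/n!`. -/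
noncomputable def laguerreL (α : ℝ) (m : ℕ) (t : ℝ) : ℝ :=
  ∑ n ∈ Finset.range (m + 1),
    (-1) ^ n * genBinom ((m : ℝ) + α) (m - n) * t ^ n / (Nat.factorial n)

/-- Auxiliary alternating sum: `∑ i (-1)^i C(n,i) ∏_{t<j} (c+i+t)`. -/
noncomputable def Tsum (c : ℝ) (n j : ℕ) : ℝ :=
  ∑ i ∈ Finset.range (n+1), (-1:ℝ)^i * (n.choose i) * ∏ t ∈ Finset.range j, (c + i + t)

lemma Tsum_zero_j (c : ℝ) (n : ℕ) : Tsum c (n+1) 0 = 0 := by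
  have h := Int.alternating_sum_range_choose (n := n+1)
  rw [if_neg (Nat.succ_ne_zero n)] at h
  have h2 : ((∑ i ∈ Finset.range (n + 2), (-1) ^ i * ((n+1).choose i : ℤ) : ℤ) : ℝ) = 0 := by
    rw [h]; norm_num
  push_cast at h2
  simpa [Tsum] using h2

lemma Tsum_succ (c : ℝ) (n j : ℕ) :
    Tsum c (n+1) (j+1) = -((j:ℝ)+1) * Tsum (c+1) n j := by
  have key : ∀ i : ℕ, (∏ t ∈ range (j+1), (c + i + t)) - (∏ t ∈ range (j+1), (c + (i+1:ℕ) + t))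
      = -((j:ℝ)+1) * ∏ t ∈ range j, (c + 1 + i + t) := by
    intro i
    have h1 : (∏ t ∈ range (j+1), (c + i + t))
        = (∏ t ∈ range j, (c + 1 + i + t)) * (c + i) := by
      rw [Finset.prod_range_succ']
      congr 1
      · exact Finset.prod_congr rfl (fun t _ => by push_cast; ring)
      · norm_num
    have h2 : (∏ t ∈ range (j+1), (c + (i+1:ℕ) + t))
        = (∏ t ∈ range j, (c + 1 + i + t)) * (c + i + 1 + j) := by
      rw [Finset.prod_range_succ]
      congr 1
      · exact Finset.prod_congr rfl (fun t _ => by push_cast; ring)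
      · push_cast; ring
    rw [h1, h2]; ring
  set Q : ℕ → ℝ := fun i => ∏ t ∈ range (j+1), (c + i + t) with hQ
  have hA : Tsum c (n+1) (j+1)
      = (∑ i ∈ range (n+1), (-1:ℝ)^i * (n.choose i) * Q i)
        - ∑ i ∈ range (n+1), (-1:ℝ)^i * (n.choose i) * Q (i+1) := by
    unfold Tsum
    rw [Finset.sum_range_succ']
    have hsplit : ∀ i ∈ range (n+1),
        (-1:ℝ)^(i+1) * ((n+1).choose (i+1)) * Q (i+1)
          = -((-1:ℝ)^i * (n.choose i) * Q (i+1)) + (-1:ℝ)^(i+1) * (n.choose (i+1)) * Q (i+1) := by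
      intro i _
      rw [Nat.choose_succ_succ]
      push_cast
      ring
    rw [Finset.sum_congr rfl hsplit, Finset.sum_add_distrib]
    have h3 : (∑ i ∈ range (n+1), (-1:ℝ)^(i+1) * (n.choose (i+1)) * Q (i+1))
        + (-1:ℝ)^0 * ((n+1).choose 0) * Q 0
        = ∑ i ∈ range (n+2), (-1:ℝ)^i * (n.choose i) * Q i := by
      rw [Finset.sum_range_succ' (f := fun i => (-1:ℝ)^i * (n.choose i) * Q i)]
      norm_num
    have h4 : (∑ i ∈ range (n+2), (-1:ℝ)^i * (n.choose i) * Q i)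
        = ∑ i ∈ range (n+1), (-1:ℝ)^i * (n.choose i) * Q i := by
      rw [Finset.sum_range_succ, Nat.choose_succ_self]
      norm_num
    have := h3
    rw [h4] at h3
    rw [Finset.sum_neg_distrib]
    linarith [h3]
  rw [hA, ← Finset.sum_sub_distrib]
  unfold Tsum
  rw [Finset.mul_sum]
  refine Finset.sum_congr rfl (fun i _ => ?_)
  have : (-1:ℝ)^i * (n.choose i) * Q i - (-1:ℝ)^i * (n.choose i) * Q (i+1)
      = (-1:ℝ)^i * (n.choose i) * (Q i - Q (i+1)) := by ring
  rw [this, hQ]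
  simp only []
  rw [key i]
  ring


lemma Tsum_lt : ∀ (n : ℕ) (c : ℝ) (j : ℕ), j < n → Tsum c n j = 0 := by
  intro n
  induction n with
  | zero => intro c j h; omega
  | succ n ih =>
    intro c j h
    match j with
    | 0 => exact Tsum_zero_j c n
    | j+1 => rw [Tsum_succ, ih (c+1) j (by omega)]; ring

lemma Tsum_diag : ∀ (n : ℕ) (c : ℝ), Tsum c n n = (-1:ℝ)^n * (Nat.factorial n) := by
  intro n
  induction n with
  | zero => intro c; simp [Tsum]
  | succ n ih =>
    intro c
    rw [Tsum_succ, ih (c+1), Nat.factorial_succ]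
    push_cast
    ring

lemma integrable_aux {α : ℝ} (hα : -1 < α) (k : ℕ) :
    IntegrableOn (fun x : ℝ => x ^ α * Real.exp (-x) * x ^ k) (Set.Ioi 0) := by
  have hpos : (0:ℝ) < α + k + 1 := by
    have : (0:ℝ) ≤ k := Nat.cast_nonneg k
    linarith
  have h := Real.GammaIntegral_convergent hpos
  refine h.congr_fun (fun x hx => ?_) measurableSet_Ioi
  have hx' : (0:ℝ) < x := hx
  beta_reduce
  rw [show α + (k:ℝ) + 1 - 1 = α + k by ring, Real.rpow_add hx', Real.rpow_natCast]
  ring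

lemma integral_aux {α : ℝ} (hα : -1 < α) (k : ℕ) :
    ∫ x in Set.Ioi (0:ℝ), x ^ α * Real.exp (-x) * x ^ k = Real.Gamma (α + k + 1) := by
  have hpos : (0:ℝ) < α + k + 1 := by
    have : (0:ℝ) ≤ k := Nat.cast_nonneg k
    linarith
  rw [Real.Gamma_eq_integral hpos]
  refine setIntegral_congr_fun measurableSet_Ioi (fun x hx => ?_)
  have hx' : (0:ℝ) < x := hx
  rw [show α + (k:ℝ) + 1 - 1 = α + k by ring, Real.rpow_add hx', Real.rpow_natCast]
  ring

lemma Gamma_prod {s : ℝ} (hs : 0 < s) (j : ℕ) :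
    Real.Gamma (s + j) = Real.Gamma s * ∏ t ∈ range j, (s + t) := by
  induction j with
  | zero => simp
  | succ j ih =>
    have hne : s + (j:ℝ) ≠ 0 := by positivity
    rw [show s + ((j:ℕ)+1:ℕ) = (s + j) + 1 by push_cast; ring,
      Real.Gamma_add_one hne, ih, Finset.prod_range_succ]
    ring

lemma laguerre_inner_sum {α : ℝ} (hα : -1 < α) (n j : ℕ) :
    ∑ i ∈ Finset.range (n+1),
        (-1:ℝ)^i * genBinom ((n:ℝ)+α) (n-i) / (Nat.factorial i) * Real.Gamma (α + i + j + 1)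
      = Real.Gamma ((n:ℝ)+α+1) / (Nat.factorial n) * Tsum (α+1) n j := by
  unfold Tsum
  rw [Finset.mul_sum]
  refine Finset.sum_congr rfl fun i hi => ?_
  have hin : i ≤ n := Nat.lt_succ_iff.mp (Finset.mem_range.mp hi)
  have hs : (0:ℝ) < α + i + 1 := by
    have : (0:ℝ) ≤ i := Nat.cast_nonneg i
    linarith
  have hGam : Real.Gamma (α + i + j + 1)
      = Real.Gamma (α+i+1) * ∏ t ∈ Finset.range j, ((α+1) + i + t) := by
    rw [show α + (i:ℝ) + (j:ℝ) + 1 = (α + i + 1) + (j:ℕ) by push_cast; ring, Gamma_prod hs]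
    exact congrArg _ (Finset.prod_congr rfl fun t _ => by ring)
  have hbin : genBinom ((n:ℝ)+α) (n-i)
      = Real.Gamma ((n:ℝ)+α+1) / ((Nat.factorial (n-i)) * Real.Gamma (α+i+1)) := by
    unfold genBinom
    rw [show ((n:ℝ)+α) - ((n-i:ℕ):ℝ) + 1 = α + i + 1 by rw [Nat.cast_sub hin]; ring,
      Real.Gamma_nat_eq_factorial]
  rw [hGam, hbin]
  have hfact : ((n.choose i : ℕ):ℝ) * (Nat.factorial i) * (Nat.factorial (n-i))
      = (Nat.factorial n) := by
    exact_mod_cast Nat.choose_mul_factorial_mul_factorial hin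
  have h1 : (Nat.factorial i : ℝ) ≠ 0 := Nat.cast_ne_zero.mpr (Nat.factorial_ne_zero i)
  have h2 : (Nat.factorial (n-i) : ℝ) ≠ 0 := Nat.cast_ne_zero.mpr (Nat.factorial_ne_zero _)
  have h3 : (Nat.factorial n : ℝ) ≠ 0 := Nat.cast_ne_zero.mpr (Nat.factorial_ne_zero n)
  have h4 : Real.Gamma (α+i+1) ≠ 0 := (Real.Gamma_pos_of_pos hs).ne'
  field_simp
  rw [← hfact]
  ring


lemma laguerre_key {α : ℝ} (hα : -1 < α) (n m : ℕ) (hmn : m ≤ n) :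
    ∫ x in Set.Ioi (0 : ℝ),
        x ^ α * Real.exp (-x) * laguerreL α n x * laguerreL α m x
      = Real.Gamma ((n : ℝ) + α + 1) / (Nat.factorial n) *
          (if n = m then 1 else 0) := by
  set c : ℕ → ℝ := fun i => (-1:ℝ)^i * genBinom ((n:ℝ)+α) (n-i) / (Nat.factorial i) with hc
  set d : ℕ → ℝ := fun j => (-1:ℝ)^j * genBinom ((m:ℝ)+α) (m-j) / (Nat.factorial j) with hd
  have hL : ∀ (k : ℕ) (e : ℕ → ℝ)
      (he : e = fun i => (-1:ℝ)^i * genBinom ((k:ℝ)+α) (k-i) / (Nat.factorial i)) (x : ℝ),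
      laguerreL α k x = ∑ i ∈ Finset.range (k+1), e i * x ^ i := by
    intro k e he x
    unfold laguerreL
    refine Finset.sum_congr rfl fun i _ => ?_
    rw [he]
    ring
  have hexp : ∀ x : ℝ, x ^ α * Real.exp (-x) * laguerreL α n x * laguerreL α m x
      = ∑ i ∈ Finset.range (n+1), ∑ j ∈ Finset.range (m+1),
          (c i * d j) * (x ^ α * Real.exp (-x) * x ^ (i+j)) := by
    intro x
    rw [hL n c hc x, hL m d hd x]
    rw [mul_assoc, Finset.sum_mul_sum, Finset.mul_sum]
    refine Finset.sum_congr rfl fun i _ => ?_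
    rw [Finset.mul_sum]
    refine Finset.sum_congr rfl fun j _ => ?_
    rw [pow_add]
    ring
  have hint : ∀ i j : ℕ, Integrable
      (fun x => (c i * d j) * (x ^ α * Real.exp (-x) * x ^ (i+j)))
      (volume.restrict (Set.Ioi (0:ℝ))) :=
    fun i j => (integrable_aux hα (i+j)).const_mul _
  calc
    ∫ x in Set.Ioi (0 : ℝ), x ^ α * Real.exp (-x) * laguerreL α n x * laguerreL α m x
        = ∫ x in Set.Ioi (0 : ℝ), ∑ i ∈ Finset.range (n+1), ∑ j ∈ Finset.range (m+1),
            (c i * d j) * (x ^ α * Real.exp (-x) * x ^ (i+j)) :=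
          integral_congr_ae (Filter.Eventually.of_forall fun x => hexp x)
    _ = ∑ i ∈ Finset.range (n+1), ∑ j ∈ Finset.range (m+1),
          (c i * d j) * Real.Gamma (α + ((i+j : ℕ) : ℝ) + 1) := by
          rw [integral_finset_sum _ (fun i _ => integrable_finset_sum _ (fun j _ => hint i j))]
          refine Finset.sum_congr rfl fun i _ => ?_
          rw [integral_finset_sum _ (fun j _ => hint i j)]
          refine Finset.sum_congr rfl fun j _ => ?_
          rw [integral_const_mul, integral_aux hα (i+j)]
    _ = ∑ j ∈ Finset.range (m+1),
          d j * (Real.Gamma ((n:ℝ)+α+1) / (Nat.factorial n) * Tsum (α+1) n j) := by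
          rw [Finset.sum_comm]
          refine Finset.sum_congr rfl fun j _ => ?_
          rw [← laguerre_inner_sum hα n j, Finset.mul_sum]
          refine Finset.sum_congr rfl fun i _ => ?_
          rw [show α + ((i+j : ℕ) : ℝ) + 1 = α + i + j + 1 by push_cast; ring, hc, hd]
          ring
    _ = Real.Gamma ((n : ℝ) + α + 1) / (Nat.factorial n) * (if n = m then 1 else 0) := by
          rcases lt_or_eq_of_le hmn with hlt | heq
          · rw [if_neg (by omega), mul_zero, Finset.sum_eq_zero]
            intro j hj
            rw [Tsum_lt n (α+1) j (by have := Finset.mem_range.mp hj; omega)]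
            ring
          · subst m
            rw [if_pos rfl, mul_one, Finset.sum_eq_single n]
            · have hg : genBinom ((n:ℝ)+α) (n-n) = 1 := by
                unfold genBinom
                rw [Nat.sub_self]
                have hne : Real.Gamma ((n:ℝ)+α+1) ≠ 0 := by
                  apply (Real.Gamma_pos_of_pos ?_).ne'
                  have : (0:ℝ) ≤ n := Nat.cast_nonneg n
                  linarith
                push_cast
                rw [show (0:ℝ) + 1 = (1:ℝ) by norm_num,
                  show (n:ℝ) + α - 0 + 1 = (n:ℝ) + α + 1 by ring, Real.Gamma_one]
                field_simp
              rw [Tsum_diag n (α+1), hd]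
              simp only [hg]
              have hneg : (-1:ℝ)^n * (-1:ℝ)^n = 1 := by
                rw [← pow_add]; exact Even.neg_one_pow ⟨n, rfl⟩
              have h3 : (Nat.factorial n : ℝ) ≠ 0 := Nat.cast_ne_zero.mpr (Nat.factorial_ne_zero n)
              field_simp
              linear_combination
                (Real.Gamma ((n:ℝ)+α+1)) * hneg
            · intro j hj hne
              rw [Tsum_lt n (α+1) j (by have := Finset.mem_range.mp hj; omega)]
              ring
            · intro h
              exact absurd (Finset.self_mem_range_succ n) h

theorem laguerre_orthogonality (α : ℝ) (hα : -1 < α) (n m : ℕ) :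
    ∫ x in Set.Ioi (0 : ℝ),
        x ^ α * Real.exp (-x) * laguerreL α n x * laguerreL α m x
      = Real.Gamma ((n : ℝ) + α + 1) / (Nat.factorial n) *
          (if n = m then 1 else 0) := by
  rcases le_or_gt m n with h | h
  · exact laguerre_key hα n m h
  · have key := laguerre_key hα m n h.le
    have hcomm : ∀ x : ℝ, x ^ α * Real.exp (-x) * laguerreL α n x * laguerreL α m x
        = x ^ α * Real.exp (-x) * laguerreL α m x * laguerreL α n x := fun x => by ring
    have hswap : (∫ x in Set.Ioi (0 : ℝ),
          x ^ α * Real.exp (-x) * laguerreL α n x * laguerreL α m x)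
        = ∫ x in Set.Ioi (0 : ℝ),
          x ^ α * Real.exp (-x) * laguerreL α m x * laguerreL α n x :=
      integral_congr_ae (Filter.Eventually.of_forall hcomm)
    rw [hswap, key, if_neg (by omega), if_neg (by omega), mul_zero, mul_zero]
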